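/- Let a, b, c, d be complex numbers and let S be the 4×4 complex matrix whose rows are (|a|²+|b|², conj(a)·c, a·conj(c), |c|²+|d|²+a·b·conj(d)+conj(a)·conj(b)·d), (conj(a), 0, conj(c), b·conj(d)), (a, c, 0, conj(b)·d), (1, 0, 0, 0). Then the characteristic polynomial of S (i.e. det(z·I − S) as a polynomial in z) equals z⁴ + p₁z³ + p₂z² + p₃z + p₄, where p₁ = −|a|² − |b|², p₂ = −2|c|² − |d|² − 2Re(a·b·conj(d)) − 2Re(a²·conj(c)), p₃ = −2Re(conj(a)·b·c·conj(d)) + |c|²(|b|² − |a|²), p₄ = |c|⁴ + |c|²|d|²; in particular all four coefficients p₁, p₂, p₃, p₄ are real. -/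

import Mathlib

open Polynomial ComplexConjugate

theorem my_det_fin_four {R : Type*} [CommRing R] (A : Matrix (Fin 4) (Fin 4) R) :
    A.det = A 0 0*A 1 1*A 2 2*A 3 3 - A 0 0*A 1 1*A 2 3*A 3 2 - A 0 0*A 1 2*A 2 1*A 3 3 + A 0 0*A 1 2*A 2 3*A 3 1 + A 0 0*A 1 3*A 2 1*A 3 2 - A 0 0*A 1 3*A 2 2*A 3 1 - A 0 1*A 1 0*A 2 2*A 3 3 + A 0 1*A 1 0*A 2 3*A 3 2 + A 0 1*A 1 2*A 2 0*A 3 3 - A 0 1*A 1 2*A 2 3*A 3 0 - A 0 1*A 1 3*A 2 0*A 3 2 + A 0 1*A 1 3*A 2 2*A 3 0 + A 0 2*A 1 0*A 2 1*A 3 3 - A 0 2*A 1 0*A 2 3*A 3 1 - A 0 2*A 1 1*A 2 0*A 3 3 + A 0 2*A 1 1*A 2 3*A 3 0 + A 0 2*A 1 3*A 2 0*A 3 1 - A 0 2*A 1 3*A 2 1*A 3 0 - A 0 3*A 1 0*A 2 1*A 3 2 + A 0 3*A 1 0*A 2 2*A 3 1 + A 0 3*A 1 1*A 2 0*A 3 2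 - A 0 3*A 1 1*A 2 2*A 3 0 - A 0 3*A 1 2*A 2 0*A 3 1 + A 0 3*A 1 2*A 2 1*A 3 0 := by
  rw [Matrix.det_succ_row_zero]
  simp [Fin.sum_univ_succ, Matrix.det_fin_three, Matrix.submatrix_apply, Fin.succAbove,
    Fin.ext_iff]
  ring

set_option maxHeartbeats 2000000 in
theorem stmt_0 (a b c d : ℂ)
    (S : Matrix (Fin 4) (Fin 4) ℂ)
    (hS : S = !![(‖a‖ ^ 2 + ‖b‖ ^ 2 : ℂ), conj a * c, a * conj c,
                   (‖c‖ ^ 2 + ‖d‖ ^ 2 : ℂ) + a * b * conj d + conj a * conj b * d;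
                 conj a, 0, conj c, b * conj d;
                 a, c, 0, conj b * d;
                 1, 0, 0, 0])
    (p₁ p₂ p₃ p₄ : ℝ)
    (hp₁ : p₁ = -‖a‖ ^ 2 - ‖b‖ ^ 2)
    (hp₂ : p₂ = -2 * ‖c‖ ^ 2 - ‖d‖ ^ 2
        - 2 * (a * b * conj d).re - 2 * (a ^ 2 * conj c).re)
    (hp₃ : p₃ = -2 * (conj a * b * c * conj d).re
        + ‖c‖ ^ 2 * (‖b‖ ^ 2 - ‖a‖ ^ 2))
    (hp₄ : p₄ = ‖c‖ ^ 4 + ‖c‖ ^ 2 * ‖d‖ ^ 2) :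
    S.charpoly = X ^ 4 + C (p₁ : ℂ) * X ^ 3 + C (p₂ : ℂ) * X ^ 2
      + C (p₃ : ℂ) * X + C (p₄ : ℂ) := by
  have habs : ∀ z : ℂ, ((‖z‖ : ℝ) : ℂ) ^ 2 = z * conj z := by
    intro z
    rw [← Complex.ofReal_pow, Complex.sq_norm, Complex.mul_conj]
  have habs4 : ∀ z : ℂ, ((‖z‖ : ℝ) : ℂ) ^ 4 = z * conj z * (z * conj z) := by
    intro z
    have : ((‖z‖ : ℝ) : ℂ) ^ 4 = (((‖z‖ : ℝ) : ℂ) ^ 2) ^ 2 := by ring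
    rw [this, habs z]; ring
  have key : ∀ z : ℂ, (C ((z.re : ℝ) : ℂ) : Polynomial ℂ) * 2 = C z + C (conj z) := by
    intro z
    have h : ((z.re : ℝ) : ℂ) * 2 = z + conj z := by
      rw [Complex.add_conj]; push_cast; ring
    rw [← map_ofNat (C : ℂ →+* Polynomial ℂ) 2, ← map_mul, h, map_add]
  subst hS hp₁ hp₂ hp₃ hp₄
  rw [Matrix.charpoly, my_det_fin_four]
  simp only [Matrix.charmatrix_apply, Matrix.of_apply, Matrix.cons_val', Matrix.cons_val_zero,
    Matrix.cons_val_one, Matrix.head_cons, Matrix.tail_cons, Matrix.cons_val_fin_one,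
    Matrix.empty_val', Matrix.head_fin_const, Matrix.diagonal_apply_eq, ne_eq, Fin.reduceEq,
    not_false_eq_true, Matrix.diagonal_apply_ne, Matrix.cons_val_two, Matrix.cons_val_three]
  push_cast
  simp only [habs, habs4]
  simp only [map_add, map_mul, map_sub, map_neg, map_pow, map_div₀, map_ofNat, map_one, map_zero, Complex.conj_conj]
  have e1 : (C (((a * b * conj d).re : ℝ) : ℂ) : Polynomial ℂ) * 2
      = C a * C b * C (conj d) + C (conj a) * C (conj b) * C d := by
    rw [key]; simp only [map_mul, map_pow, Complex.conj_conj]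
  have e2 : (C (((a ^ 2 * conj c).re : ℝ) : ℂ) : Polynomial ℂ) * 2
      = C a ^ 2 * C (conj c) + C (conj a) ^ 2 * C c := by
    rw [key]; simp only [map_mul, map_pow, Complex.conj_conj]
  have e3 : (C (((conj a * b * c * conj d).re : ℝ) : ℂ) : Polynomial ℂ) * 2
      = C (conj a) * C b * C c * C (conj d) + C a * C (conj b) * C (conj c) * C d := by
    rw [key]; simp only [map_mul, map_pow, Complex.conj_conj]
  linear_combination (X : Polynomial ℂ) ^ 2 * e1 + (X : Polynomial ℂ) ^ 2 * e2
    + (X : Polynomial ℂ) * e3
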